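/- With the notation of the hierarchical walk: if in addition v ∈ ℂ^{d+1} satisfies (P_H Λ) v = μ v, where Λ = Σ_{j=0}^d λ_j |j⟩⟨j| and P_j w_j = λ_j w_j for each j, then v ⊗ (⊗_{j=0}^d w_j) is an eigenvector of P_G = Σ_j (P_H |j⟩⟨j|) ⊗ Ã_j with eigenvalue μ. -/
import Mathlib


open Matrix Finset

/-- If `(P_H Λ) v = μ v` and `P_j w_j = λ_j w_j`, then the product vector
`v ⊗ (⊗_j w_j)` is an eigenvector of the hierarchical transition matrix `P_G`
with eigenvalue `μ`. -/
theorem stmt_2 (d : ℕ) (n : Fin (d + 1) → ℕ)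
    (PH : Matrix (Fin (d + 1)) (Fin (d + 1)) ℂ)
    (P : ∀ j, Matrix (Fin (n j)) (Fin (n j)) ℂ)
    (lam : Fin (d + 1) → ℂ)
    (w : ∀ j, Fin (n j) → ℂ)
    (hw : ∀ j, (P j) *ᵥ (w j) = lam j • w j)
    (PG : Matrix (Fin (d + 1) × (∀ j, Fin (n j)))
                 (Fin (d + 1) × (∀ j, Fin (n j))) ℂ)
    (hPG : ∀ x y, PG x y =
      ∑ j : Fin (d + 1),
        (PH x.1 j * (if y.1 = j then 1 else 0)) *
          ((P j) (x.2 j) (y.2 j) *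
            ∏ k ∈ Finset.univ.erase j, (if x.2 k = y.2 k then (1 : ℂ) else 0)))
    (v : Fin (d + 1) → ℂ) (μ : ℂ)
    (hv : (PH * Matrix.diagonal lam) *ᵥ v = μ • v) :
    PG *ᵥ (fun x => v x.1 * ∏ j, w j (x.2 j)) =
      μ • fun x => v x.1 * ∏ j, w j (x.2 j) := by
  funext x
  have hw' : ∀ j, ∑ i, P j (x.2 j) i * w j i = lam j * w j (x.2 j) := by
    intro j
    have := congrFun (hw j) (x.2 j)
    simpa [mulVec, dotProduct] using this
  have hv' : ∑ j, PH x.1 j * lam j * v j = μ * v x.1 := by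
    have := congrFun hv x.1
    simpa [mulVec, dotProduct, Matrix.mul_diagonal] using this
  simp only [mulVec, dotProduct, Pi.smul_apply, smul_eq_mul, hPG]
  rw [Fintype.sum_prod_type]
  simp only [Finset.sum_mul, ite_mul, one_mul, zero_mul, mul_ite, mul_zero]
  conv_lhs => enter [2, y1]; rw [Finset.sum_comm]
  rw [Finset.sum_comm]
  conv_lhs => enter [2, j]; rw [Finset.sum_comm]
  simp only [Finset.sum_ite_eq', Finset.mem_univ, if_true]
  rw [← mul_assoc, ← hv', Finset.sum_mul]
  refine Finset.sum_congr rfl fun j _ => ?_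
  set G : ∀ k, Fin (n k) → ℂ :=
    Function.update (fun k i => (if x.2 k = i then (1:ℂ) else 0) * w k i) j
      (fun i => P j (x.2 j) i * w j i) with hG
  have hGj : G j = fun i => P j (x.2 j) i * w j i := Function.update_self _ _ _
  have hGk : ∀ k, k ≠ j → G k = fun i => (if x.2 k = i then (1:ℂ) else 0) * w k i :=
    fun k hk => Function.update_of_ne hk _ _
  calc ∑ y2 : ∀ k, Fin (n k), PH x.1 j * 1 *
        (P j (x.2 j) (y2 j) * ∏ k ∈ univ.erase j, if x.2 k = y2 k then (1:ℂ) else 0) *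
        (v j * ∏ m, w m (y2 m))
      = PH x.1 j * v j * ∑ y2 : ∀ k, Fin (n k), ∏ k, G k (y2 k) := by
        rw [Finset.mul_sum]
        refine Finset.sum_congr rfl fun y2 _ => ?_
        rw [← Finset.mul_prod_erase univ (fun k => G k (y2 k)) (mem_univ j),
            ← Finset.mul_prod_erase univ (fun m => w m (y2 m)) (mem_univ j)]
        have h3 : ∏ k ∈ univ.erase j, G k (y2 k)
            = ∏ k ∈ univ.erase j, (if x.2 k = y2 k then (1:ℂ) else 0) * w k (y2 k) :=
          Finset.prod_congr rfl fun k hk => by rw [hGk k (Finset.ne_of_mem_erase hk)]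
        rw [h3, Finset.prod_mul_distrib]
        simp only [hGj]
        ring
    _ = PH x.1 j * lam j * v j * ∏ m, w m (x.2 m) := by
        rw [← Fintype.prod_sum]
        rw [← Finset.mul_prod_erase univ (fun k => ∑ i, G k i) (mem_univ j),
            ← Finset.mul_prod_erase univ (fun m => w m (x.2 m)) (mem_univ j)]
        have h1 : ∑ i, G j i = lam j * w j (x.2 j) := by
          simp only [hGj]; exact hw' j
        have h2 : ∏ k ∈ univ.erase j, ∑ i, G k i = ∏ k ∈ univ.erase j, w k (x.2 k) := by
          refine Finset.prod_congr rfl fun k hk => ?_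
          rw [hGk k (Finset.ne_of_mem_erase hk)]
          simp
        rw [h1, h2]; ring
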